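/- Let ω_i, ω_ℓ, ω_m be mutually distinct real numbers, let ω_q be any real number, let N ≥ 3 be a real number, and let σ, τ : ℝ → ℂ be continuous with |σ(θ)| ≤ C₁ · ⟨θ⟩^{−N} and |τ(θ)| ≤ C₁ · ⟨θ⟩^{−N} for all θ ∈ ℝ. Then there exists a constant C₂ > 0, depending only on C₁, N and the ω's, such that for all θ₀ ∈ ℝ and all ξ_d ≥ 0: ∫_{ξ_d}^{+∞} ∫_{s}^{+∞} |σ(θ₀ + ω_q ξ_d + (ω_i − ω_q)s + (ω_ℓ − ω_i)r) · τ(θ₀ + ω_q ξ_d + (ω_i − ω_q)s + (ω_m − ω_i)r)| dr ds ≤ C₂ · ⟨ξ_d⟩^{−N+2}. -/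

import Mathlib

open MeasureTheory
open scoped ENNReal


lemma tail_lintegral7 (p : ℝ) (hp : 1 < p) (c : ℝ) (hc : 0 ≤ c) :
    ∫⁻ r in Set.Ioi c, ENNReal.ofReal ((1 + r) ^ (-p)) ≤
      ENNReal.ofReal ((1 + c) ^ (1 - p) / (p - 1)) := by
  simp_rw [add_comm (1:ℝ)]
  have hg : MeasurePreserving (fun x : ℝ => x + 1) volume volume :=
    measurePreserving_add_right volume 1
  have hge : MeasurableEmbedding (fun x : ℝ => x + 1) :=
    (Homeomorph.addRight (1:ℝ)).measurableEmbedding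
  have hpre : (fun x : ℝ => x + 1) ⁻¹' Set.Ioi (c + 1) = Set.Ioi c := by
    ext x; simp [Set.mem_Ioi]
  have key : ∫⁻ r in Set.Ioi c, ENNReal.ofReal ((r + 1) ^ (-p)) =
      ∫⁻ y in Set.Ioi (c + 1), ENNReal.ofReal (y ^ (-p)) := by
    rw [← hpre, hg.setLIntegral_comp_preimage_emb hge (fun y => ENNReal.ofReal (y ^ (-p)))]
  rw [key]
  have hc1 : (0:ℝ) < c + 1 := by linarith
  have hint : IntegrableOn (fun x : ℝ => x ^ (-p)) (Set.Ioi (c + 1)) :=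
    integrableOn_Ioi_rpow_of_lt (by linarith) hc1
  have hnn : 0 ≤ᵐ[volume.restrict (Set.Ioi (c + 1))] fun x : ℝ => x ^ (-p) := by
    filter_upwards [ae_restrict_mem measurableSet_Ioi] with x hx
    exact Real.rpow_nonneg (by have := hx.out; linarith) _
  rw [← ofReal_integral_eq_lintegral_ofReal hint hnn,
    integral_Ioi_rpow_of_lt (by linarith) hc1]
  apply ENNReal.ofReal_le_ofReal
  have hp1 : p - 1 ≠ 0 := by intro h; linarith [sub_eq_zero.mp h]
  have heq : -(c+1)^(-p+1)/(-p+1) = (c+1)^(1-p)/(p-1) := by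
    rw [show -p+1 = 1-p by ring]
    field_simp
    rw [show (1:ℝ)-p = -(p-1) by ring, div_neg, neg_neg, div_self hp1]
  rw [heq]

lemma key_rpow_bound (m L N a b r δ : ℝ) (hm : 0 < m) (hm1 : m ≤ 1) (hm2 : m ≤ δ ^ 2)
    (hL : L = Real.sqrt m / 2) (hab : a - b = δ * r) (hr0 : (0:ℝ) < 1 + r) (hN0 : 0 ≤ N) :
    ((((1 + a ^ 2) ^ (1/2 : ℝ)) * ((1 + b ^ 2) ^ (1/2 : ℝ))) ^ (-N)) ≤
      L ^ (-N) * (1 + r) ^ (-N) := by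
  have hLpos : 0 < L := by
    rw [hL]; have := Real.sqrt_pos.mpr hm; positivity
  have hsq : m * (1 + r) ^ 2 / 4 ≤ (1 + a ^ 2) * (1 + b ^ 2) := by
    have e1 : 1 + (a - b) ^ 2 ≤ 2 * ((1 + a ^ 2) * (1 + b ^ 2)) := by
      nlinarith [sq_nonneg (a + b), sq_nonneg (a * b)]
    have e2 : m * (1 + r ^ 2) ≤ 1 + (a - b) ^ 2 := by
      rw [hab]; nlinarith [sq_nonneg r]
    have e3 : m * (1 + r) ^ 2 / 2 ≤ m * (1 + r ^ 2) := by
      nlinarith [sq_nonneg (1 - r), hm.le]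
    linarith
  have hkey : L * (1 + r) ≤ ((1 + a ^ 2) ^ (1/2 : ℝ)) * ((1 + b ^ 2) ^ (1/2 : ℝ)) := by
    have hL2 : (L * (1 + r)) ^ 2 = m * (1 + r) ^ 2 / 4 := by
      rw [hL, mul_pow, div_pow, Real.sq_sqrt hm.le]; ring
    calc L * (1 + r) = Real.sqrt ((L * (1 + r)) ^ 2) :=
          (Real.sqrt_sq (by positivity)).symm
      _ = Real.sqrt (m * (1 + r) ^ 2 / 4) := by rw [hL2]
      _ ≤ Real.sqrt ((1 + a ^ 2) * (1 + b ^ 2)) := Real.sqrt_le_sqrt hsq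
      _ = Real.sqrt (1 + a ^ 2) * Real.sqrt (1 + b ^ 2) :=
          Real.sqrt_mul (by positivity) _
      _ = ((1 + a ^ 2) ^ (1/2 : ℝ)) * ((1 + b ^ 2) ^ (1/2 : ℝ)) := by
          rw [Real.sqrt_eq_rpow, Real.sqrt_eq_rpow]
  calc ((((1 + a ^ 2) ^ (1/2 : ℝ)) * ((1 + b ^ 2) ^ (1/2 : ℝ))) ^ (-N))
      ≤ (L * (1 + r)) ^ (-N) :=
        Real.rpow_le_rpow_of_nonpos (by positivity) hkey (by linarith)
    _ = L ^ (-N) * (1 + r) ^ (-N) := Real.mul_rpow hLpos.le hr0.le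


set_option maxHeartbeats 1000000 in
theorem stmt7 (ωi ωl ωm ωq : ℝ) (h1 : ωi ≠ ωl) (h2 : ωi ≠ ωm) (h3 : ωl ≠ ωm)
    (N : ℝ) (hN : 3 ≤ N) (C₁ : ℝ) :
    ∃ C₂ > (0 : ℝ), ∀ σ τ : ℝ → ℂ, Continuous σ → Continuous τ →
      (∀ θ : ℝ, ‖σ θ‖ ≤ C₁ * (((1 + θ ^ 2) ^ (1/2 : ℝ)) ^ (-N))) →
      (∀ θ : ℝ, ‖τ θ‖ ≤ C₁ * (((1 + θ ^ 2) ^ (1/2 : ℝ)) ^ (-N))) →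
      ∀ θ₀ ξd : ℝ, 0 ≤ ξd →
        (∫⁻ s in Set.Ioi ξd, ∫⁻ r in Set.Ioi s,
            (‖σ (θ₀ + ωq * ξd + (ωi - ωq) * s + (ωl - ωi) * r) *
              τ (θ₀ + ωq * ξd + (ωi - ωq) * s + (ωm - ωi) * r)‖₊ : ℝ≥0∞)) ≤
          ENNReal.ofReal (C₂ * (((1 + ξd ^ 2) ^ (1/2 : ℝ)) ^ (-N + 2))) := by
  have hδ : (ωl - ωm) ≠ 0 := sub_ne_zero.mpr h3
  obtain ⟨m, hmdef⟩ : ∃ m : ℝ, m = min 1 ((ωl - ωm) ^ 2) := ⟨_, rfl⟩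
  have hm : 0 < m := hmdef ▸ lt_min one_pos (by positivity)
  have hm1 : m ≤ 1 := hmdef ▸ min_le_left _ _
  have hm2 : m ≤ (ωl - ωm) ^ 2 := hmdef ▸ min_le_right _ _
  obtain ⟨L, hLdef⟩ : ∃ L : ℝ, L = Real.sqrt m / 2 := ⟨_, rfl⟩
  have hL : 0 < L := by
    rw [hLdef]; have := Real.sqrt_pos.mpr hm; positivity
  obtain ⟨A, hAdef⟩ : ∃ A : ℝ, A = max C₁ 0 + 1 := ⟨_, rfl⟩
  have hA : 0 < A := by rw [hAdef]; positivity
  obtain ⟨K, hKdef⟩ : ∃ K : ℝ, K = A ^ 2 * L ^ (-N) := ⟨_, rfl⟩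
  have hK : 0 < K := by
    rw [hKdef]; have := Real.rpow_pos_of_pos hL (-N); positivity
  have hN1 : (1:ℝ) < N - 1 := by linarith
  have hN2 : (0:ℝ) < N - 2 := by linarith
  refine ⟨K / ((N - 1) * (N - 2)), by positivity, ?_⟩
  intro σ τ hσc hτc hσ hτ θ₀ ξd hξd
  have hC₁ : 0 ≤ C₁ := by
    have h := hσ 0
    have h0 : (((1 + (0:ℝ) ^ 2) ^ (1/2 : ℝ)) ^ (-N)) = 1 := by norm_num
    rw [h0, mul_one] at h
    exact le_trans (norm_nonneg _) h
  have hC₁A : C₁ ≤ A := by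
    have : C₁ ≤ max C₁ 0 := le_max_left _ _
    linarith [hAdef ▸ le_refl A]
  -- pointwise bound
  have hpoint : ∀ s r : ℝ, ξd < s → s < r →
      ‖σ (θ₀ + ωq * ξd + (ωi - ωq) * s + (ωl - ωi) * r) *
        τ (θ₀ + ωq * ξd + (ωi - ωq) * s + (ωm - ωi) * r)‖ ≤ K * (1 + r) ^ (-N) := by
    intro s r hs hr
    obtain ⟨a, hadef⟩ : ∃ a : ℝ, a = θ₀ + ωq * ξd + (ωi - ωq) * s + (ωl - ωi) * r := ⟨_, rfl⟩
    obtain ⟨b, hbdef⟩ : ∃ b : ℝ, b = θ₀ + ωq * ξd + (ωi - ωq) * s + (ωm - ωi) * r := ⟨_, rfl⟩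
    rw [← hadef, ← hbdef]
    have hab : a - b = (ωl - ωm) * r := by rw [hadef, hbdef]; ring
    have hr0 : (0:ℝ) < 1 + r := by linarith
    have hbig := key_rpow_bound m L N a b r (ωl - ωm) hm hm1 hm2 hLdef hab hr0 (by linarith)
    have hpa : (0:ℝ) ≤ (1 + a ^ 2) ^ (1/2 : ℝ) := Real.rpow_nonneg (by positivity) _
    have hpb : (0:ℝ) ≤ (1 + b ^ 2) ^ (1/2 : ℝ) := Real.rpow_nonneg (by positivity) _
    have hpan : (0:ℝ) ≤ ((1 + a ^ 2) ^ (1/2 : ℝ)) ^ (-N) := Real.rpow_nonneg hpa _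
    have hpbn : (0:ℝ) ≤ ((1 + b ^ 2) ^ (1/2 : ℝ)) ^ (-N) := Real.rpow_nonneg hpb _
    calc ‖σ a * τ b‖ = ‖σ a‖ * ‖τ b‖ := norm_mul _ _
      _ ≤ (C₁ * (((1 + a ^ 2) ^ (1/2 : ℝ)) ^ (-N))) *
            (C₁ * (((1 + b ^ 2) ^ (1/2 : ℝ)) ^ (-N))) :=
          mul_le_mul (hσ a) (hτ b) (norm_nonneg _) (by positivity)
      _ = C₁ ^ 2 * ((((1 + a ^ 2) ^ (1/2 : ℝ)) * ((1 + b ^ 2) ^ (1/2 : ℝ))) ^ (-N)) := by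
          rw [Real.mul_rpow hpa hpb]; ring
      _ ≤ A ^ 2 * (L ^ (-N) * (1 + r) ^ (-N)) := by
          have hC2 : C₁ ^ 2 ≤ A ^ 2 := by nlinarith
          have h0 : (0:ℝ) ≤ (((1 + a ^ 2) ^ (1/2 : ℝ)) * ((1 + b ^ 2) ^ (1/2 : ℝ))) ^ (-N) :=
            Real.rpow_nonneg (by positivity) _
          have := mul_le_mul hC2 hbig h0 (by positivity)
          linarith
      _ = K * (1 + r) ^ (-N) := by rw [hKdef]; ring
  -- inner integral bound
  have hinner : ∀ s : ℝ, ξd < s →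
      (∫⁻ r in Set.Ioi s,
          (‖σ (θ₀ + ωq * ξd + (ωi - ωq) * s + (ωl - ωi) * r) *
            τ (θ₀ + ωq * ξd + (ωi - ωq) * s + (ωm - ωi) * r)‖₊ : ℝ≥0∞)) ≤
        ENNReal.ofReal ((K / (N - 1)) * (1 + s) ^ (-(N - 1))) := by
    intro s hs
    have hs0 : 0 ≤ s := le_trans hξd hs.le
    calc (∫⁻ r in Set.Ioi s,
          (‖σ (θ₀ + ωq * ξd + (ωi - ωq) * s + (ωl - ωi) * r) *
            τ (θ₀ + ωq * ξd + (ωi - ωq) * s + (ωm - ωi) * r)‖₊ : ℝ≥0∞))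
        ≤ ∫⁻ r in Set.Ioi s, ENNReal.ofReal (K * (1 + r) ^ (-N)) := by
          apply MeasureTheory.setLIntegral_mono' measurableSet_Ioi
          intro r hr
          rw [← ENNReal.ofReal_coe_nnreal, coe_nnnorm]
          exact ENNReal.ofReal_le_ofReal (hpoint s r hs hr)
      _ = ENNReal.ofReal K * ∫⁻ r in Set.Ioi s, ENNReal.ofReal ((1 + r) ^ (-N)) := by
          simp_rw [ENNReal.ofReal_mul hK.le]
          rw [MeasureTheory.lintegral_const_mul' _ _ ENNReal.ofReal_ne_top]
      _ ≤ ENNReal.ofReal K * ENNReal.ofReal ((1 + s) ^ (1 - N) / (N - 1)) := by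
          gcongr
          exact tail_lintegral7 N (by linarith) s hs0
      _ = ENNReal.ofReal ((K / (N - 1)) * (1 + s) ^ (-(N - 1))) := by
          rw [← ENNReal.ofReal_mul hK.le]
          congr 1
          rw [show -(N - 1) = 1 - N by ring]
          field_simp
  calc (∫⁻ s in Set.Ioi ξd, ∫⁻ r in Set.Ioi s,
        (‖σ (θ₀ + ωq * ξd + (ωi - ωq) * s + (ωl - ωi) * r) *
          τ (θ₀ + ωq * ξd + (ωi - ωq) * s + (ωm - ωi) * r)‖₊ : ℝ≥0∞))
      ≤ ∫⁻ s in Set.Ioi ξd, ENNReal.ofReal ((K / (N - 1)) * (1 + s) ^ (-(N - 1))) :=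
        MeasureTheory.setLIntegral_mono' measurableSet_Ioi (fun s hs => hinner s hs)
    _ = ENNReal.ofReal (K / (N - 1)) *
          ∫⁻ s in Set.Ioi ξd, ENNReal.ofReal ((1 + s) ^ (-(N - 1))) := by
        simp_rw [ENNReal.ofReal_mul (by positivity : (0:ℝ) ≤ K / (N - 1))]
        rw [MeasureTheory.lintegral_const_mul' _ _ ENNReal.ofReal_ne_top]
    _ ≤ ENNReal.ofReal (K / (N - 1)) *
          ENNReal.ofReal ((1 + ξd) ^ (1 - (N - 1)) / ((N - 1) - 1)) := by
        gcongr
        exact tail_lintegral7 (N - 1) hN1 ξd hξd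
    _ ≤ ENNReal.ofReal (K / ((N - 1) * (N - 2)) * (((1 + ξd ^ 2) ^ (1/2 : ℝ)) ^ (-N + 2))) := by
        rw [← ENNReal.ofReal_mul (by positivity : (0:ℝ) ≤ K / (N - 1))]
        apply ENNReal.ofReal_le_ofReal
        have hB : (0:ℝ) < (1 + ξd ^ 2) ^ (1/2 : ℝ) := Real.rpow_pos_of_pos (by positivity) _
        have hBle : (1 + ξd ^ 2) ^ (1/2 : ℝ) ≤ 1 + ξd := by
          rw [← Real.sqrt_eq_rpow]
          rw [show (1:ℝ) + ξd = Real.sqrt ((1 + ξd) ^ 2) from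
            (Real.sqrt_sq (by linarith)).symm]
          apply Real.sqrt_le_sqrt
          nlinarith
        have hmono : (1 + ξd) ^ (-N + 2) ≤ (((1 + ξd ^ 2) ^ (1/2 : ℝ)) ^ (-N + 2)) :=
          Real.rpow_le_rpow_of_nonpos hB hBle (by linarith)
        have hrw : (1:ℝ) - (N - 1) = -N + 2 := by ring
        rw [hrw]
        have heq : K / (N - 1) * ((1 + ξd) ^ (-N + 2) / (N - 1 - 1)) =
            K / ((N - 1) * (N - 2)) * (1 + ξd) ^ (-N + 2) := by
          rw [show N - 1 - 1 = N - 2 by ring]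
          field_simp
        rw [heq]
        exact mul_le_mul_of_nonneg_left hmono (by positivity)
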